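/- arXiv:1003.3849 — 4 statements merged into one kernel-verified Lean document; each statement's English description precedes it below -/
import Mathlib

section
/- Let (E, h) be a real inner product space with 2 ≤ dim E < ∞, let P ⊆ E be a 2-dimensional subspace, and let α > 0 and q > 0. Then there exist X, Y spanning P such that: h(Y,Y) = α⁻², α² (h(X,X)h(Y,Y) − h(X,Y)²) + h(Y,Y) − h(X,X) = α⁻² (equivalently α²·(h(X,X)h(Y,Y) − h(X,Y)²) = h(X,X)), and h(X,X)h(Y,Y) − h(X,Y)² ≥ q. In particular, every plane of E is spanned by pairs satisfying the normalization constraints α²·Gram(X,Y) + h(Y,Y) − h(X,X) = α⁻² and h(Y,Y) ≥ α⁻² with arbitrarily large Gram determinant Gram(X,Y) := h(X,X)h(Y,Y) − h(X,Y)². -/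
noncomputable section

open RealInnerProductSpace

/-- Every plane `P` of a real inner product space of dimension `≥ 2` is spanned by pairs
`X, Y` satisfying `h(Y,Y) = α⁻²` and `α²·Gram(X,Y) + h(Y,Y) − h(X,X) = α⁻²`
(equivalently `α²·Gram(X,Y) = h(X,X)`), with arbitrarily large Gram determinant. -/
theorem plane_spanned_with_large_gram
    {E : Type*} [NormedAddCommGroup E] [InnerProductSpace ℝ E] [FiniteDimensional ℝ E]
    (hdim : 2 ≤ Module.finrank ℝ E)
    (P : Submodule ℝ E) (hP : Module.finrank ℝ P = 2)
    (α q : ℝ) (hα : 0 < α) (hq : 0 < q) :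
    ∃ X Y : E,
      Submodule.span ℝ {X, Y} = P ∧
      ⟪Y, Y⟫ = (α ^ 2)⁻¹ ∧
      α ^ 2 * (⟪X, X⟫ * ⟪Y, Y⟫ - ⟪X, Y⟫ ^ 2) + ⟪Y, Y⟫ - ⟪X, X⟫ = (α ^ 2)⁻¹ ∧
      α ^ 2 * (⟪X, X⟫ * ⟪Y, Y⟫ - ⟪X, Y⟫ ^ 2) = ⟪X, X⟫ ∧
      ⟪X, X⟫ * ⟪Y, Y⟫ - ⟪X, Y⟫ ^ 2 ≥ q := by
  set b : OrthonormalBasis (Fin 2) ℝ P :=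
    (stdOrthonormalBasis ℝ P).reindex (finCongr hP) with hb
  set e₁ : E := (b 0 : E) with he₁
  set e₂ : E := (b 1 : E) with he₂
  have horth := b.orthonormal
  have h11 : ⟪e₁, e₁⟫ = 1 := by
    have := horth.1 0
    rw [norm_eq_sqrt_real_inner] at this
    have h2 : Real.sqrt ⟪(b 0 : P), (b 0 : P)⟫ = 1 := this
    have h3 : ⟪(b 0 : P), (b 0 : P)⟫ = 1 := by
      nlinarith [Real.sq_sqrt (real_inner_self_nonneg (x := (b 0 : P))),
        real_inner_self_nonneg (x := (b 0 : P))]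
    exact h3
  have h22 : ⟪e₂, e₂⟫ = 1 := by
    have := horth.1 1
    rw [norm_eq_sqrt_real_inner] at this
    have h3 : ⟪(b 1 : P), (b 1 : P)⟫ = 1 := by
      nlinarith [Real.sq_sqrt (real_inner_self_nonneg (x := (b 1 : P))),
        real_inner_self_nonneg (x := (b 1 : P))]
    exact h3
  have h12 : ⟪e₁, e₂⟫ = 0 := by
    have := horth.2 (i := 0) (j := 1) (by decide)
    exact this
  set s : ℝ := α * Real.sqrt q with hs
  have hs0 : s ≠ 0 := by positivity
  have hα0 : (α : ℝ)⁻¹ ≠ 0 := by positivity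
  have hs2 : s ^ 2 = α ^ 2 * q := by
    rw [hs, mul_pow, Real.sq_sqrt hq.le]
  refine ⟨s • e₁, α⁻¹ • e₂, ?_, ?_, ?_, ?_, ?_⟩
  · -- span
    have hspan : Submodule.span ℝ {e₁, e₂} = P := by
      have hbspan : Submodule.span ℝ (Set.range (b : Fin 2 → P)) = ⊤ := by
        have := b.toBasis.span_eq
        rwa [b.coe_toBasis] at this
      have h1 : Submodule.span ℝ (Set.range (((↑) : P → E) ∘ b)) = P := by
        rw [Set.range_comp]
        have hval : Subtype.val '' Set.range (b : Fin 2 → P)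
            = ⇑P.subtype '' Set.range (b : Fin 2 → P) := rfl
        rw [hval, ← Submodule.map_span, hbspan, Submodule.map_top, Submodule.range_subtype]
      have h2 : Set.range (((↑) : P → E) ∘ b) = {e₁, e₂} := by
        ext x
        constructor
        · rintro ⟨i, rfl⟩
          fin_cases i <;> simp [he₁, he₂]
        · rintro (rfl | rfl)
          exacts [⟨0, rfl⟩, ⟨1, rfl⟩]
      rw [← h2, h1]
    rw [← hspan]
    have e1mem : e₁ ∈ Submodule.span ℝ ({s • e₁, α⁻¹ • e₂} : Set E) := by
      have : s • e₁ ∈ Submodule.span ℝ ({s • e₁, α⁻¹ • e₂} : Set E) :=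
        Submodule.subset_span (by simp)
      have := Submodule.smul_mem _ s⁻¹ this
      rwa [smul_smul, inv_mul_cancel₀ hs0, one_smul] at this
    have e2mem : e₂ ∈ Submodule.span ℝ ({s • e₁, α⁻¹ • e₂} : Set E) := by
      have : α⁻¹ • e₂ ∈ Submodule.span ℝ ({s • e₁, α⁻¹ • e₂} : Set E) :=
        Submodule.subset_span (by simp)
      have := Submodule.smul_mem _ α this
      rwa [smul_smul, mul_inv_cancel₀ hα.ne', one_smul] at this
    apply le_antisymm
    · rw [Submodule.span_le]
      rintro x (rfl | rfl)
      · exact Submodule.smul_mem _ _ (Submodule.subset_span (by simp))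
      · exact Submodule.smul_mem _ _ (Submodule.subset_span (by simp))
    · rw [Submodule.span_le]
      rintro x (rfl | rfl)
      exacts [e1mem, e2mem]
  case _ =>
    rw [real_inner_smul_left, real_inner_smul_right, h22]
    field_simp
  all_goals
    have hXX : ⟪s • e₁, s • e₁⟫ = s ^ 2 := by
      rw [real_inner_smul_left, real_inner_smul_right, h11]; ring
    have hYY : ⟪α⁻¹ • e₂, α⁻¹ • e₂⟫ = (α ^ 2)⁻¹ := by
      rw [real_inner_smul_left, real_inner_smul_right, h22]
      field_simp
    have hXY : ⟪s • e₁, α⁻¹ • e₂⟫ = 0 := by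
      rw [real_inner_smul_left, real_inner_smul_right, h12]; ring
    rw [hXX, hYY, hXY, hs2]
  · field_simp; ring
  · field_simp; ring
  · have : α ^ 2 * q * (α ^ 2)⁻¹ - 0 ^ 2 = q := by field_simp; ring
    rw [this]
end
end

section
/- Let (E, h) be a real inner product space with 2 ≤ dim E < ∞, let B be a symmetric bilinear form on the second exterior power Λ²E, and let α > 0 and a', a'' ∈ ℝ. On V := ℝ × E define the Lorentzian form g((u,X),(v,Y)) := u v − α² h(X,Y), and for U = (u,X) and V' = (v,Y) in V define Q(U, V') := −α² B(X∧Y, X∧Y) + α a'' h(uY − vX, uY − vX) − (α a')² (h(X,X)h(Y,Y) − h(X,Y)²). Then the sign condition 'Q(U, V') ≤ 0 for every timelike U (i.e. g(U,U) > 0) and every spacelike V' (i.e. g(V',V') < 0)' holds if and only if a'' ≤ 0 and B(X∧Y, X∧Y) ≥ (α a'' − a'²)·(h(X,X)h(Y,Y) − h(X,Y)²) for all X, Y ∈ E. (This is the pointwise algebraic content of the criterion: for a warped product metric dt² − α(t)² h, the condition ⟨R(U∧V'), U∧V'⟩ ≤ 0 for all timelike U and spacelike V' is equivalent to α'' ≤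 0 together with the lower bound inf of sectional curvatures of (M,h) ≥ sup (αα'' − α'²), where Q is the value of ⟨R(U∧V'), U∧V'⟩ given by the warped-product curvature formula with B the curvature form of (M,h).) -/
noncomputable section

open RealInnerProductSpace

/-- The exterior product `X ∧ Y` as an element of the second exterior power. -/
def wedge2 {V : Type*} [AddCommGroup V] [Module ℝ V] (u v : V) : ⋀[ℝ]^2 V :=
  ⟨ExteriorAlgebra.ιMulti ℝ 2 ![u, v],
    ExteriorAlgebra.ιMulti_range ℝ 2 (Set.mem_range_self ![u, v])⟩

lemma wedge2_zero_right {V : Type*} [AddCommGroup V] [Module ℝ V] (X : V) :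
    wedge2 X (0 : V) = 0 := by
  apply Subtype.ext
  show ExteriorAlgebra.ιMulti ℝ 2 ![X, 0] = 0
  exact AlternatingMap.map_coord_zero _ 1 (by simp)

lemma wedge2_zero_left {V : Type*} [AddCommGroup V] [Module ℝ V] (Y : V) :
    wedge2 (0 : V) Y = 0 := by
  apply Subtype.ext
  show ExteriorAlgebra.ιMulti ℝ 2 ![0, Y] = 0
  exact AlternatingMap.map_coord_zero _ 0 (by simp)

lemma wedge2_add_smul {V : Type*} [AddCommGroup V] [Module ℝ V] (X Y : V) (c : ℝ) :
    wedge2 X (Y + c • X) = wedge2 X Y := by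
  apply Subtype.ext
  show ExteriorAlgebra.ιMulti ℝ 2 ![X, Y + c • X] = ExteriorAlgebra.ιMulti ℝ 2 ![X, Y]
  have e1 : ![X, Y + c • X] = Function.update ![X, Y] 1 (Y + c • X) := by
    ext i; fin_cases i <;> simp
  have e2 : Function.update ![X, Y] 1 Y = ![X, Y] := by
    ext i; fin_cases i <;> simp
  have e3 : Function.update ![X, Y] 1 (c • X) = ![X, c • X] := by
    ext i; fin_cases i <;> simp
  rw [e1, AlternatingMap.map_update_add, e2, e3]
  have h0 : ExteriorAlgebra.ιMulti ℝ 2 ![X, c • X] = 0 := by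
    have e4 : ![X, c • X] = Function.update ![X, X] 1 (c • X) := by
      ext i; fin_cases i <;> simp
    rw [e4, AlternatingMap.map_update_smul]
    have e5 : Function.update ![X, X] 1 X = ![X, X] := by ext i; fin_cases i <;> simp
    rw [e5, AlternatingMap.map_eq_zero_of_eq _ _ (i := 0) (j := 1) (by simp) (by simp), smul_zero]
  rw [h0, add_zero]

lemma le_of_forall_pos_aux {T b c : ℝ} (hc : 0 ≤ c) (h : ∀ t : ℝ, 0 < t → T ≤ b + c * t) :
    T ≤ b := by
  rcases hc.eq_or_lt with h0 | h0
  · simpa [← h0] using h 1 one_pos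
  · by_contra hb
    push_neg at hb
    have h2 := h ((T - b) / (2 * c)) (div_pos (by linarith) (by linarith))
    have h3 : c * ((T - b) / (2 * c)) = (T - b) / 2 := by
      field_simp
    rw [h3] at h2
    linarith

set_option maxHeartbeats 1600000 in
/-- Pointwise algebraic content of the sign condition on timelike sectional curvatures of a
warped product `dt² − α(t)² h`: the quantity
`Q(U,V') = −α² B(X∧Y, X∧Y) + α a'' h(uY − vX, uY − vX) − (α a')² Gram(X,Y)`
is `≤ 0` for every timelike `U = (u,X)` and spacelike `V' = (v,Y)` iff `a'' ≤ 0` and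
`B(X∧Y, X∧Y) ≥ (α a'' − a'²)·Gram(X,Y)` for all `X, Y`. -/
theorem warped_sign_condition_iff
    {E : Type*} [NormedAddCommGroup E] [InnerProductSpace ℝ E] [FiniteDimensional ℝ E]
    (hdim : 2 ≤ Module.finrank ℝ E)
    (B : ⋀[ℝ]^2 E →ₗ[ℝ] ⋀[ℝ]^2 E →ₗ[ℝ] ℝ)
    (hBsymm : ∀ ω ψ : ⋀[ℝ]^2 E, B ω ψ = B ψ ω)
    (α a' a'' : ℝ) (hα : 0 < α) :
    (∀ (u v : ℝ) (X Y : E),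
        u * u - α ^ 2 * ⟪X, X⟫ > 0 →
        v * v - α ^ 2 * ⟪Y, Y⟫ < 0 →
        -α ^ 2 * B (wedge2 X Y) (wedge2 X Y)
          + α * a'' * ⟪u • Y - v • X, u • Y - v • X⟫
          - (α * a') ^ 2 * (⟪X, X⟫ * ⟪Y, Y⟫ - ⟪X, Y⟫ ^ 2) ≤ 0) ↔
      (a'' ≤ 0 ∧
        ∀ X Y : E, B (wedge2 X Y) (wedge2 X Y)
          ≥ (α * a'' - a' ^ 2) * (⟪X, X⟫ * ⟪Y, Y⟫ - ⟪X, Y⟫ ^ 2)) := by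
  constructor
  · intro H
    have hnt : Nontrivial E := by
      have : 0 < Module.finrank ℝ E := by omega
      exact Module.nontrivial_of_finrank_pos this
    obtain ⟨y, hy⟩ := exists_ne (0 : E)
    set Y₀ : E := (‖y‖ : ℝ)⁻¹ • y with hY₀def
    have hY₀ : ⟪Y₀, Y₀⟫ = 1 := by
      have hny : ‖y‖ ≠ 0 := norm_ne_zero_iff.2 hy
      rw [hY₀def, real_inner_smul_left, real_inner_smul_right, real_inner_self_eq_norm_sq]
      field_simp
    have ha'' : a'' ≤ 0 := by
      have h1 := H 1 0 0 Y₀ (by simp) (by rw [hY₀]; nlinarith)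
      rw [wedge2_zero_left] at h1
      simp only [map_zero, LinearMap.zero_apply, zero_smul, sub_zero, one_smul,
        inner_zero_left, inner_zero_right, hY₀] at h1
      nlinarith
    refine ⟨ha'', ?_⟩
    intro X Y
    by_cases hX : X = 0
    · subst hX
      rw [wedge2_zero_left]
      simp
    · have hXXpos : 0 < ⟪X, X⟫ := by
        rw [real_inner_self_eq_norm_sq]; exact pow_pos (norm_pos_iff.2 hX) 2
      set c : ℝ := ⟪X, Y⟫ / ⟪X, X⟫ with hcdef
      set Y' : E := Y - c • X with hY'def
      have horth : ⟪X, Y'⟫ = 0 := by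
        rw [hY'def, inner_sub_right, real_inner_smul_right, hcdef]
        field_simp
        ring
      have hY : Y = Y' + c • X := by rw [hY'def]; abel
      have hw : wedge2 X Y = wedge2 X Y' := by
        rw [hY, wedge2_add_smul]
      have hcomm : ⟪Y', X⟫ = 0 := by rw [real_inner_comm]; exact horth
      have hG : ⟪X, X⟫ * ⟪Y, Y⟫ - ⟪X, Y⟫ ^ 2 = ⟪X, X⟫ * ⟪Y', Y'⟫ := by
        rw [hY]
        simp only [inner_add_right, inner_add_left, real_inner_smul_right,
          real_inner_smul_left, horth, hcomm]
        ring
      rw [hw, hG]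
      by_cases hY'0 : Y' = 0
      · rw [hY'0, wedge2_zero_right]
        simp
      · have hY'pos : 0 < ⟪Y', Y'⟫ := by
          rw [real_inner_self_eq_norm_sq]; exact pow_pos (norm_pos_iff.2 hY'0) 2
        apply le_of_forall_pos_aux (c := -a'' * ⟪Y', Y'⟫ / α)
        · have : 0 ≤ -a'' := by linarith
          positivity
        · intro t ht
          set u : ℝ := Real.sqrt (α ^ 2 * ⟪X, X⟫ + t) with hudef
          have hu2 : u * u = α ^ 2 * ⟪X, X⟫ + t := Real.mul_self_sqrt (by positivity)
          have h1 := H u 0 X Y' (by rw [hu2]; linarith)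
            (by nlinarith [mul_pos (pow_pos hα 2) hY'pos])
          simp only [zero_smul, sub_zero, real_inner_smul_left, real_inner_smul_right,
            horth] at h1
          have hu' : u * (u * ⟪Y', Y'⟫) = (α ^ 2 * ⟪X, X⟫ + t) * ⟪Y', Y'⟫ := by
            rw [← hu2]; ring
          rw [hu'] at h1
          apply le_of_mul_le_mul_right _ hα
          apply le_of_mul_le_mul_right _ hα
          have e : (B (wedge2 X Y') (wedge2 X Y') + -a'' * ⟪Y', Y'⟫ / α * t) * α * α
              = B (wedge2 X Y') (wedge2 X Y') * α * α + (-a'' * ⟪Y', Y'⟫) * t * α := by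
            field_simp
          rw [e]
          nlinarith [h1]
  · rintro ⟨ha'', hB⟩ u v X Y hU hV
    have hBXY := hB X Y
    have hS : ⟪u • Y - v • X, u • Y - v • X⟫ =
        u * u * ⟪Y, Y⟫ - 2 * (u * v) * ⟪X, Y⟫ + v * v * ⟪X, X⟫ := by
      simp only [inner_sub_left, inner_sub_right, real_inner_smul_left,
        real_inner_smul_right, real_inner_comm Y X]
      ring
    rw [hS]
    have hbr : u * u * ⟪Y, Y⟫ - 2 * (u * v) * ⟪X, Y⟫ + v * v * ⟪X, X⟫
        - α ^ 2 * (⟪X, X⟫ * ⟪Y, Y⟫ - ⟪X, Y⟫ ^ 2) > 0 := by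
      nlinarith [mul_pos hU (neg_pos.2 hV), sq_nonneg (u * v - α ^ 2 * ⟪X, Y⟫),
        mul_pos hα hα]
    have h1 : α ^ 2 * ((α * a'' - a' ^ 2) * (⟪X, X⟫ * ⟪Y, Y⟫ - ⟪X, Y⟫ ^ 2))
        ≤ α ^ 2 * B (wedge2 X Y) (wedge2 X Y) :=
      mul_le_mul_of_nonneg_left hBXY (sq_nonneg α)
    have h2 : α * a'' * (u * u * ⟪Y, Y⟫ - 2 * (u * v) * ⟪X, Y⟫ + v * v * ⟪X, X⟫
        - α ^ 2 * (⟪X, X⟫ * ⟪Y, Y⟫ - ⟪X, Y⟫ ^ 2)) ≤ 0 :=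
      mul_nonpos_of_nonpos_of_nonneg
        (mul_nonpos_of_nonneg_of_nonpos hα.le ha'') hbr.le
    nlinarith [h1, h2]
end
end

section
/- Let c > 0 and let s ↦ (t(s), x(s)), for s ∈ [s₀, ∞), be a timelike unit geodesic of the Einstein–de Sitter-like metric (t'' = −c t^{2c−1}|x'|², x'' = −(2c/t) t' x', t'² − t^{2c}|x'|² = 1, t' > 0) with x'(s₀) ≠ 0. Then: (i) x(s) = x(s₀) + (x'(s₀)/|x'(s₀)|) ∫_{s₀}^{s} a·t(τ)^{−2c} dτ where a := t(s₀)^{c}√(t'(s₀)² − 1) > 0; and (ii) the limit lim_{s→∞} x(s) exists in ℝ³ if and only if c > 1/2; for c ≤ 1/2 one has |x(s)| → ∞. -/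
noncomputable section

open Filter

set_option maxHeartbeats 1000000

/-- For a timelike unit geodesic of the Einstein–de Sitter-like metric `dt² − t^{2c}|dx|²`
with nonvanishing space velocity: (i) the explicit integral formula for `x(s)`;
(ii) `x(s)` converges as `s → ∞` iff `c > 1/2`; (iii) for `c ≤ 1/2`, `|x(s)| → ∞`. -/
theorem eds_timelike_geodesic_space_asymptotics (c : ℝ) (hc : 0 < c) (s₀ : ℝ)
    (t t' t'' : ℝ → ℝ) (x x' x'' : ℝ → EuclideanSpace ℝ (Fin 3))
    (hpos : ∀ s ∈ Set.Ici s₀, 0 < t s)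
    (ht : ∀ s ∈ Set.Ici s₀, HasDerivAt t (t' s) s)
    (ht' : ∀ s ∈ Set.Ici s₀, HasDerivAt t' (t'' s) s)
    (hx : ∀ s ∈ Set.Ici s₀, HasDerivAt x (x' s) s)
    (hx' : ∀ s ∈ Set.Ici s₀, HasDerivAt x' (x'' s) s)
    (geo_t : ∀ s ∈ Set.Ici s₀, t'' s = -(c * t s ^ (2 * c - 1) * ‖x' s‖ ^ 2))
    (geo_x : ∀ s ∈ Set.Ici s₀, x'' s = -((2 * c / t s) * t' s) • x' s)
    (hunit : ∀ s ∈ Set.Ici s₀, t' s ^ 2 - t s ^ (2 * c) * ‖x' s‖ ^ 2 = 1 ∧ 0 < t' s)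
    (hx'0 : x' s₀ ≠ 0) :
    (∀ s ∈ Set.Ici s₀,
      x s = x s₀ +
        (∫ τ in s₀..s, (t s₀ ^ c * Real.sqrt (t' s₀ ^ 2 - 1)) * t τ ^ (-(2 * c))) •
          (‖x' s₀‖⁻¹ • x' s₀)) ∧
    ((∃ L : EuclideanSpace ℝ (Fin 3), Tendsto x atTop (nhds L)) ↔ 1 / 2 < c) ∧
    (c ≤ 1 / 2 → Tendsto (fun s => ‖x s‖) atTop atTop) := by
  have ht0 : 0 < t s₀ := hpos s₀ Set.self_mem_Ici
  have hnorm0 : 0 < ‖x' s₀‖ := norm_pos_iff.mpr hx'0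
  set a : ℝ := t s₀ ^ c * Real.sqrt (t' s₀ ^ 2 - 1) with ha_def
  -- a = t₀^{2c} * ‖x'₀‖
  have hsq : ∀ s ∈ Set.Ici s₀, t s ^ (2*c) = (t s ^ c)^2 := by
    intro s hs
    rw [← Real.rpow_natCast (t s ^ c) 2, ← Real.rpow_mul (hpos s hs).le]
    norm_num [mul_comm]
  have ha_eq : a = t s₀ ^ (2*c) * ‖x' s₀‖ := by
    obtain ⟨hu, _⟩ := hunit s₀ Set.self_mem_Ici
    have h1 : t' s₀ ^ 2 - 1 = (t s₀ ^ c * ‖x' s₀‖)^2 := by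
      rw [mul_pow, ← hsq s₀ Set.self_mem_Ici]; linarith
    rw [ha_def, h1, Real.sqrt_sq (by positivity), hsq s₀ Set.self_mem_Ici]; ring
  have ha_pos : 0 < a := by
    rw [ha_eq]; positivity
  -- conservation law
  have hcons : ∀ s ∈ Set.Ici s₀, t s ^ (2*c) • x' s = t s₀ ^ (2*c) • x' s₀ := by
    intro s hs
    have key : ∀ u ∈ Set.Ici s₀, HasDerivAt (fun u => t u ^ (2*c) • x' u) 0 u := by
      intro u hu
      have htu : (0:ℝ) < t u := hpos u hu
      have hrp : HasDerivAt (fun u => t u ^ (2*c)) (t' u * (2*c) * t u ^ (2*c-1)) u :=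
        (ht u hu).rpow_const (Or.inl htu.ne')
      have hd := hrp.smul (hx' u hu)
      have h0 : t u ^ (2*c) • x'' u + (t' u * (2*c) * t u ^ (2*c-1)) • x' u = 0 := by
        rw [geo_x u hu, smul_smul, ← add_smul]
        have he : t u ^ (2*c-1) = t u ^ (2*c) / t u := by
          rw [Real.rpow_sub htu, Real.rpow_one]
        rw [he]
        have : t u ^ (2 * c) * -(2 * c / t u * t' u) + t' u * (2 * c) * (t u ^ (2 * c) / t u) = 0 := by
          field_simp; ring
        rw [this, zero_smul]
      rw [h0] at hd
      exact hd
    have hcst := constant_of_has_deriv_right_zero (f := fun u => t u ^ (2*c) • x' u)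
      (a := s₀) (b := s)
      (fun u hu => ((key u (Set.mem_Ici.2 hu.1)).continuousAt).continuousWithinAt)
      (fun u hu => ((key u (Set.mem_Ici.2 hu.1)).hasDerivWithinAt))
    exact hcst s ⟨hs, le_rfl⟩
  have ht2c_pos : ∀ s ∈ Set.Ici s₀, (0:ℝ) < t s ^ (2*c) := fun s hs =>
    Real.rpow_pos_of_pos (hpos s hs) _
  -- explicit formula for x'
  have hx'eq : ∀ s ∈ Set.Ici s₀, x' s = (a * t s ^ (-(2*c)) * ‖x' s₀‖⁻¹) • x' s₀ := by
    intro s hs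
    have h1 : x' s = (t s ^ (2*c))⁻¹ • (t s₀ ^ (2*c) • x' s₀) := by
      rw [← hcons s hs, inv_smul_smul₀ (ht2c_pos s hs).ne']
    rw [h1, smul_smul]
    congr 1
    rw [Real.rpow_neg (hpos s hs).le, ha_eq]
    field_simp
  -- continuity & integrability of the integrand
  set h : ℝ → ℝ := fun τ => a * t τ ^ (-(2*c)) with hh_def
  have hcontt : ContinuousOn t (Set.Ici s₀) := fun u hu => (ht u hu).continuousAt.continuousWithinAt
  have h_cont : ContinuousOn h (Set.Ici s₀) :=
    continuousOn_const.mul (hcontt.rpow_const fun τ hτ => Or.inl (hpos τ hτ).ne')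
  have h_int : ∀ u v, s₀ ≤ u → u ≤ v → IntervalIntegrable h MeasureTheory.volume u v := by
    intro u v hu huv
    apply ContinuousOn.intervalIntegrable
    apply h_cont.mono
    rw [Set.uIcc_of_le huv]
    exact fun τ hτ => le_trans hu hτ.1
  have h_pos : ∀ τ ∈ Set.Ici s₀, 0 < h τ := fun τ hτ =>
    mul_pos ha_pos (Real.rpow_pos_of_pos (hpos τ hτ) _)
  set v : EuclideanSpace ℝ (Fin 3) := ‖x' s₀‖⁻¹ • x' s₀ with hv_def
  have hv_norm : ‖v‖ = 1 := by
    rw [hv_def, norm_smul, norm_inv, norm_norm, inv_mul_cancel₀ hnorm0.ne']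
  set F : ℝ → ℝ := fun s => ∫ τ in s₀..s, h τ with hF_def
  -- part (i)
  have part1 : ∀ s ∈ Set.Ici s₀, x s = x s₀ + F s • v := by
    intro s hs
    have hsub : Set.uIcc s₀ s ⊆ Set.Ici s₀ := by
      rw [Set.uIcc_of_le hs]; exact fun τ hτ => hτ.1
    have hx'cont : ContinuousOn x' (Set.uIcc s₀ s) := fun u hu =>
      (hx' u (hsub hu)).continuousAt.continuousWithinAt
    have hftc : ∫ τ in s₀..s, x' τ = x s - x s₀ :=
      intervalIntegral.integral_eq_sub_of_hasDerivAt (fun τ hτ => hx τ (hsub hτ))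
        (hx'cont.intervalIntegrable)
    have hcg : ∫ τ in s₀..s, x' τ = ∫ τ in s₀..s, h τ • v := by
      apply intervalIntegral.integral_congr
      intro τ hτ
      simp only [hh_def, hv_def, smul_smul]
      exact hx'eq τ (hsub hτ)
    rw [hcg, intervalIntegral.integral_smul_const] at hftc
    simp only [hF_def]
    rw [hftc]
    abel
  -- F is monotone on [s₀, ∞)
  have Fmono : ∀ u v', s₀ ≤ u → u ≤ v' → F u ≤ F v' := by
    intro u v' hu huv
    have hsplit := intervalIntegral.integral_add_adjacent_intervals
      (h_int s₀ u le_rfl hu) (h_int u v' hu huv)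
    have hnn : 0 ≤ ∫ τ in u..v', h τ :=
      intervalIntegral.integral_nonneg huv (fun τ hτ => (h_pos τ (le_trans hu hτ.1)).le)
    simp only [hF_def]
    rw [← hsplit]
    linarith
  have F_nonneg : ∀ s ∈ Set.Ici s₀, 0 ≤ F s := by
    intro s hs
    have : F s₀ = 0 := intervalIntegral.integral_same
    linarith [Fmono s₀ s le_rfl hs]
  -- t' ≥ 1
  have ht'ge1 : ∀ s ∈ Set.Ici s₀, 1 ≤ t' s := by
    intro s hs
    obtain ⟨hu, hp⟩ := hunit s hs
    nlinarith [mul_nonneg (Real.rpow_nonneg (hpos s hs).le (2*c)) (sq_nonneg ‖x' s‖)]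
  -- linear lower bound on t
  have tlow : ∀ s ∈ Set.Ici s₀, t s₀ + (s - s₀) ≤ t s := by
    intro s hs
    have hmono : MonotoneOn (fun u => t u - u) (Set.Ici s₀) := by
      apply monotoneOn_of_deriv_nonneg (convex_Ici s₀)
      · exact fun u hu => ((ht u hu).sub (hasDerivAt_id u)).continuousAt.continuousWithinAt
      · intro u hu
        rw [interior_Ici] at hu
        exact (((ht u (Set.mem_Ici.2 (le_of_lt hu))).sub (hasDerivAt_id u))).differentiableAt.differentiableWithinAt
      · intro u hu
        rw [interior_Ici] at hu
        have hd : HasDerivAt (fun u => t u - u) (t' u - 1) u := by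
          exact (ht u (Set.mem_Ici.2 (le_of_lt hu))).sub (hasDerivAt_id u)
        rw [hd.deriv]
        linarith [ht'ge1 u (Set.mem_Ici.2 (le_of_lt hu))]
    have := hmono Set.self_mem_Ici hs hs
    simp only at this
    linarith
  have tmono : ∀ s ∈ Set.Ici s₀, t s₀ ≤ t s := by
    intro s hs
    have := tlow s hs
    simp only [Set.mem_Ici] at hs
    linarith
  -- M and upper bound on t'
  set M : ℝ := Real.sqrt (1 + a^2 * t s₀ ^ (-(2*c))) with hM_def
  have hM1 : 1 ≤ M := by
    rw [hM_def, show (1:ℝ) = Real.sqrt 1 from (Real.sqrt_one).symm]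
    apply Real.sqrt_le_sqrt
    have : 0 ≤ a^2 * t s₀ ^ (-(2*c)) := by positivity
    linarith [Real.sqrt_one]
  have hM_sq : M^2 = 1 + a^2 * t s₀ ^ (-(2*c)) := Real.sq_sqrt (by positivity)
  have ht'M : ∀ s ∈ Set.Ici s₀, t' s ≤ M := by
    intro s hs
    obtain ⟨hu, hp⟩ := hunit s hs
    -- t^{2c} ‖x'‖ = a
    have he : t s ^ (2*c) * ‖x' s‖ = a := by
      have := congrArg norm (hcons s hs)
      rw [norm_smul, norm_smul] at this
      rw [Real.norm_eq_abs, abs_of_pos (ht2c_pos s hs), Real.norm_eq_abs,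
        abs_of_pos (ht2c_pos s₀ Set.self_mem_Ici)] at this
      rw [this, ha_eq]
    have hP : (0:ℝ) < t s ^ (2*c) := ht2c_pos s hs
    have hP0 : (0:ℝ) < t s₀ ^ (2*c) := ht2c_pos s₀ Set.self_mem_Ici
    have hPle : t s₀ ^ (2*c) ≤ t s ^ (2*c) :=
      Real.rpow_le_rpow ht0.le (tmono s hs) (by positivity)
    have h1 : t s ^ (2*c) * ‖x' s‖^2 = a^2 / t s ^ (2*c) := by
      rw [← he]; field_simp
    have h2 : a^2 / t s ^ (2*c) ≤ a^2 / t s₀ ^ (2*c) := by gcongr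
    have h3 : a^2 / t s₀ ^ (2*c) = a^2 * t s₀ ^ (-(2*c)) := by
      rw [Real.rpow_neg ht0.le, div_eq_mul_inv]
    nlinarith [Real.sqrt_nonneg (1 + a^2 * t s₀ ^ (-(2*c)))]
  -- linear upper bound on t
  have thigh : ∀ s ∈ Set.Ici s₀, t s ≤ t s₀ + M * (s - s₀) := by
    intro s hs
    have hmono : MonotoneOn (fun u => M * u - t u) (Set.Ici s₀) := by
      apply monotoneOn_of_deriv_nonneg (convex_Ici s₀)
      · exact fun u hu => (((hasDerivAt_id u).const_mul M).sub (ht u hu)).continuousAt.continuousWithinAt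
      · intro u hu
        rw [interior_Ici] at hu
        exact (((hasDerivAt_id u).const_mul M).sub (ht u (Set.mem_Ici.2 (le_of_lt hu)))).differentiableAt.differentiableWithinAt
      · intro u hu
        rw [interior_Ici] at hu
        have hd : HasDerivAt (fun u => M * u - t u) (M - t' u) u := by
          exact (((hasDerivAt_id u).const_mul M).sub (ht u (Set.mem_Ici.2 (le_of_lt hu)))).congr_deriv (by ring)
        rw [hd.deriv]
        linarith [ht'M u (Set.mem_Ici.2 (le_of_lt hu))]
    have := hmono Set.self_mem_Ici hs hs
    simp only at this
    linarith
  -- convergence for c > 1/2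
  have hconv : 1/2 < c → ∃ L, Tendsto x atTop (nhds L) := by
    intro hc2
    have hp_ne : (1:ℝ) - 2*c ≠ 0 := by linarith
    set d : ℝ := t s₀ - s₀ with hd_def
    set B : ℝ := a * (t s₀ ^ (1-2*c) / (2*c-1)) with hB_def
    have hFle : ∀ s ∈ Set.Ici s₀, F s ≤ B := by
      intro s hs
      simp only [Set.mem_Ici] at hs
      have hpos' : ∀ τ ∈ Set.Icc s₀ s, (0:ℝ) < τ + d := by
        intro τ hτ
        simp only [hd_def]
        linarith [hτ.1, ht0]
      have hbd_cont : ContinuousOn (fun τ => a * (τ + d) ^ (-(2*c))) (Set.Icc s₀ s) := by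
        apply continuousOn_const.mul
        apply ContinuousOn.rpow_const
        · exact (continuous_id.add continuous_const).continuousOn
        · exact fun τ hτ => Or.inl (hpos' τ hτ).ne'
      have hbd_int : IntervalIntegrable (fun τ => a * (τ + d) ^ (-(2*c)))
          MeasureTheory.volume s₀ s := by
        apply ContinuousOn.intervalIntegrable
        rw [Set.uIcc_of_le hs]
        exact hbd_cont
      have hcomp : F s ≤ ∫ τ in s₀..s, a * (τ + d) ^ (-(2*c)) := by
        apply intervalIntegral.integral_mono_on hs (h_int s₀ s le_rfl hs) hbd_int
        intro τ hτ
        simp only [hh_def]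
        have h1 : t τ ^ (-(2*c)) ≤ (τ+d) ^ (-(2*c)) := by
          apply Real.rpow_le_rpow_of_nonpos (hpos' τ hτ) _ (by linarith)
          have := tlow τ hτ.1
          simp only [hd_def]
          linarith
        exact mul_le_mul_of_nonneg_left h1 ha_pos.le
      have hftc : ∫ τ in s₀..s, (τ + d) ^ (-(2*c))
          = (s+d)^(1-2*c)/(1-2*c) - (s₀+d)^(1-2*c)/(1-2*c) := by
        apply intervalIntegral.integral_eq_sub_of_hasDerivAt
        · intro τ hτ
          rw [Set.uIcc_of_le hs] at hτ
          have h0 : (0:ℝ) < τ + d := hpos' τ hτ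
          have hdd : HasDerivAt (fun u : ℝ => u + d) 1 τ := (hasDerivAt_id τ).add_const d
          have hder := (hdd.rpow_const (p := 1-2*c) (Or.inl h0.ne')).div_const (1-2*c)
          refine hder.congr_deriv ?_
          rw [show (1:ℝ)-2*c-1 = -(2*c) by ring]
          field_simp
        · apply ContinuousOn.intervalIntegrable
          rw [Set.uIcc_of_le hs]
          apply ContinuousOn.rpow_const
          · exact (continuous_id.add continuous_const).continuousOn
          · exact fun τ hτ => Or.inl (hpos' τ hτ).ne'
      have hs₀d : s₀ + d = t s₀ := by simp only [hd_def]; ring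
      have hXnn : (0:ℝ) ≤ (s+d)^(1-2*c) :=
        Real.rpow_nonneg (hpos' s ⟨hs, le_rfl⟩).le _
      have hval : ∫ τ in s₀..s, a * (τ + d) ^ (-(2*c))
          = a * ((s+d)^(1-2*c)/(1-2*c) - t s₀^(1-2*c)/(1-2*c)) := by
        rw [intervalIntegral.integral_const_mul, hftc, hs₀d]
      have hkey : (s+d)^(1-2*c)/(1-2*c) - t s₀^(1-2*c)/(1-2*c)
          = (t s₀^(1-2*c) - (s+d)^(1-2*c))/(2*c-1) := by
        rw [div_sub_div_same, ← neg_div_neg_eq, neg_sub]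
        congr 1
        ring
      have hfin : a * ((s+d)^(1-2*c)/(1-2*c) - t s₀^(1-2*c)/(1-2*c)) ≤ B := by
        rw [hkey, hB_def]
        gcongr
        · linarith
        · linarith
      linarith [hcomp, hval ▸ hfin]
    set Ft : ℝ → ℝ := fun s => F (max s s₀) with hFt_def
    have hFtmono : Monotone Ft := fun u v' huv =>
      Fmono _ _ (le_max_right u s₀) (max_le_max huv le_rfl)
    have hFtbdd : BddAbove (Set.range Ft) := by
      refine ⟨B, ?_⟩
      rintro y ⟨s, rfl⟩
      exact hFle _ (Set.mem_Ici.2 (le_max_right s s₀))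
    have hFt := tendsto_atTop_ciSup hFtmono hFtbdd
    refine ⟨x s₀ + (⨆ i, Ft i) • v, ?_⟩
    have heq : (fun s => x s₀ + Ft s • v) =ᶠ[atTop] x := by
      filter_upwards [eventually_ge_atTop s₀] with s hs
      simp only [hFt_def, max_eq_left hs]
      exact (part1 s hs).symm
    exact Tendsto.congr' heq (tendsto_const_nhds.add (hFt.smul_const v))
  -- divergence for c ≤ 1/2
  have hdiv : c ≤ 1/2 → Tendsto (fun s => ‖x s‖) atTop atTop := by
    intro hc2
    set d : ℝ := t s₀ - s₀ with hd_def
    set s₁ : ℝ := max s₀ (s₀ + 1 - t s₀) with hs₁_def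
    have hs₁ : s₀ ≤ s₁ := le_max_left _ _
    have hu1 : ∀ τ, s₁ ≤ τ → 1 ≤ τ + d := by
      intro τ hτ
      have h2 := le_trans (le_max_right s₀ (s₀ + 1 - t s₀)) hτ
      simp only [hd_def]
      linarith
    set K : ℝ := a * M ^ (-(2*c)) with hK_def
    have hM0 : (0:ℝ) < M := lt_of_lt_of_le one_pos hM1
    have hK0 : 0 < K := mul_pos ha_pos (Real.rpow_pos_of_pos hM0 _)
    have hlow : ∀ τ, s₁ ≤ τ → K * (τ + d)⁻¹ ≤ h τ := by
      intro τ hτ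
      have hτ0 : s₀ ≤ τ := le_trans hs₁ hτ
      have hu := hu1 τ hτ
      have hu0 : (0:ℝ) < τ + d := by linarith
      have htτ : 0 < t τ := hpos τ hτ0
      have hle : t τ ≤ M * (τ + d) := by
        have h3 := thigh τ hτ0
        have h2 : t s₀ + M * (τ - s₀) ≤ M * (τ + d) := by
          simp only [hd_def]
          nlinarith [ht0, hM1]
        linarith
      have h1 : (M * (τ+d)) ^ (-(2*c)) ≤ t τ ^ (-(2*c)) :=
        Real.rpow_le_rpow_of_nonpos htτ hle (by linarith)
      have h2 : (M * (τ+d)) ^ (-(2*c)) = M ^ (-(2*c)) * (τ+d) ^ (-(2*c)) :=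
        Real.mul_rpow hM0.le hu0.le
      have h3 : (τ+d)⁻¹ ≤ (τ+d) ^ (-(2*c)) := by
        rw [← Real.rpow_neg_one]
        exact Real.rpow_le_rpow_of_exponent_le hu (by linarith)
      calc K * (τ+d)⁻¹ ≤ K * (τ+d)^(-(2*c)) := mul_le_mul_of_nonneg_left h3 hK0.le
        _ = a * (M^(-(2*c)) * (τ+d)^(-(2*c))) := by rw [hK_def]; ring
        _ = a * (M * (τ+d)) ^ (-(2*c)) := by rw [h2]
        _ ≤ a * t τ ^ (-(2*c)) := mul_le_mul_of_nonneg_left h1 ha_pos.le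
    have hlog : ∀ s, s₁ ≤ s → K * (Real.log (s + d) - Real.log (s₁ + d)) ≤ F s := by
      intro s hss
      have hs0 : s₀ ≤ s := le_trans hs₁ hss
      have hint_inv : IntervalIntegrable (fun τ => K * (τ + d)⁻¹)
          MeasureTheory.volume s₁ s := by
        apply ContinuousOn.intervalIntegrable
        rw [Set.uIcc_of_le hss]
        apply continuousOn_const.mul
        apply ContinuousOn.inv₀
        · exact (continuous_id.add continuous_const).continuousOn
        · intro τ hτ
          have := hu1 τ hτ.1
          linarith
      have hmono_int : ∫ τ in s₁..s, K * (τ + d)⁻¹ ≤ ∫ τ in s₁..s, h τ := by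
        apply intervalIntegral.integral_mono_on hss hint_inv (h_int s₁ s hs₁ hss)
        exact fun τ hτ => hlow τ hτ.1
      have hftc : ∫ τ in s₁..s, K * (τ + d)⁻¹
          = K * Real.log (s + d) - K * Real.log (s₁ + d) := by
        apply intervalIntegral.integral_eq_sub_of_hasDerivAt _ hint_inv
        intro τ hτ
        rw [Set.uIcc_of_le hss] at hτ
        have h0 : τ + d ≠ 0 := by
          have := hu1 τ hτ.1
          linarith
        have hder := (((hasDerivAt_id τ).add_const d).log h0).const_mul K
        simpa [one_div] using hder
      have hsplit : F s = F s₁ + ∫ τ in s₁..s, h τ := by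
        simp only [hF_def]
        rw [← intervalIntegral.integral_add_adjacent_intervals
          (h_int s₀ s₁ le_rfl hs₁) (h_int s₁ s hs₁ hss)]
      have hFs₁ : 0 ≤ F s₁ := F_nonneg s₁ hs₁
      calc K * (Real.log (s+d) - Real.log (s₁+d))
          = K * Real.log (s+d) - K * Real.log (s₁+d) := by ring
        _ = ∫ τ in s₁..s, K * (τ + d)⁻¹ := hftc.symm
        _ ≤ ∫ τ in s₁..s, h τ := hmono_int
        _ ≤ F s := by rw [hsplit]; linarith
    have hlogtop : Tendsto (fun s => K * (Real.log (s + d) - Real.log (s₁ + d)))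
        atTop atTop := by
      apply Tendsto.const_mul_atTop hK0
      simp only [sub_eq_add_neg]
      apply tendsto_atTop_add_const_right
      exact Real.tendsto_log_atTop.comp (tendsto_atTop_add_const_right atTop d tendsto_id)
    have hFtop : Tendsto F atTop atTop := by
      apply tendsto_atTop_mono' atTop _ hlogtop
      filter_upwards [eventually_ge_atTop s₁] with s hs
      exact hlog s hs
    have hnorm_ge : ∀ᶠ s in atTop, F s - ‖x s₀‖ ≤ ‖x s‖ := by
      filter_upwards [eventually_ge_atTop s₀] with s hs
      have hxe : x s - x s₀ = F s • v := by rw [part1 s hs]; abel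
      have hns : ‖x s - x s₀‖ = F s := by
        rw [hxe, norm_smul, hv_norm, mul_one, Real.norm_eq_abs,
          abs_of_nonneg (F_nonneg s hs)]
      have htr := norm_sub_le (x s) (x s₀)
      rw [hns] at htr
      linarith
    apply tendsto_atTop_mono' atTop hnorm_ge
    simpa [sub_eq_add_neg] using tendsto_atTop_add_const_right atTop (-‖x s₀‖) hFtop
  refine ⟨fun s hs => part1 s hs, ⟨?_, fun h2 => hconv h2⟩, hdiv⟩
  rintro ⟨L, hL⟩
  by_contra hcle
  exact not_tendsto_atTop_of_tendsto_nhds hL.norm (hdiv (le_of_not_gt hcle))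
end
end

section
/- Let a > 0 and let t: [s₀, ∞) → (0, ∞) be differentiable with t'(s) = √(1 + a²/t(s)) for all s. Then the function s ↦ √(t(s)(t(s)+a²)) − a² log(√(t(s)) + √(t(s)+a²)) − s is constant on [s₀, ∞), and t(s)/s → 1 as s → ∞. (This describes the time coordinate of timelike geodesics of the Einstein–de Sitter-like metric with exponent c = 1/2, for which t' = √(1 + a² t^{−2c}) with a = t^c√(t'²−1) constant: s − s₀ = √(t_s(t_s+a²)) − a² log(√t_s + √(t_s+a²)) and t_s ∼ s.) -/
noncomputable section

open Filter

private lemma hasDerivAt_FF (a : ℝ) {x : ℝ} (hx : 0 < x) :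
    HasDerivAt (fun x => Real.sqrt (x*(x+a^2)) - a^2 * Real.log (Real.sqrt x + Real.sqrt (x+a^2)))
      (Real.sqrt x / Real.sqrt (x+a^2)) x := by
  have hxa : 0 < x + a^2 := by positivity
  set u := Real.sqrt x with hu'
  set v := Real.sqrt (x + a^2) with hv'
  have hu : 0 < u := Real.sqrt_pos.mpr hx
  have hv : 0 < v := Real.sqrt_pos.mpr hxa
  have hu2 : u^2 = x := Real.sq_sqrt hx.le
  have hv2 : v^2 = x + a^2 := Real.sq_sqrt hxa.le
  have huv : Real.sqrt (x*(x+a^2)) = u * v := Real.sqrt_mul hx.le _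
  have h1 : HasDerivAt (fun y : ℝ => y*(y+a^2)) (2*x+a^2) x := by
    have := (hasDerivAt_id x).fun_mul ((hasDerivAt_id x).add_const (a^2))
    refine this.congr_deriv ?_
    simp; ring
  have h2 : HasDerivAt (fun y : ℝ => Real.sqrt (y*(y+a^2))) ((2*x+a^2)/(2*(u*v))) x := by
    have := h1.sqrt (by positivity : x*(x+a^2) ≠ 0)
    rwa [huv] at this
  have h3 : HasDerivAt (fun y : ℝ => Real.sqrt y + Real.sqrt (y + a^2)) (1/(2*u) + 1/(2*v)) x := by
    have ha1 : HasDerivAt (fun y : ℝ => Real.sqrt y) (1/(2*u)) x := Real.hasDerivAt_sqrt hx.ne'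
    have ha2 : HasDerivAt (fun y : ℝ => Real.sqrt (y + a^2)) (1/(2*v)) x := by
      have := ((hasDerivAt_id x).add_const (a^2)).sqrt (by positivity : x + a^2 ≠ 0)
      simpa using this
    exact ha1.add ha2
  have h4 : HasDerivAt (fun y : ℝ => Real.log (Real.sqrt y + Real.sqrt (y + a^2)))
      ((1/(2*u) + 1/(2*v))/(u+v)) x := h3.log (by positivity)
  have h5 := h2.fun_sub (h4.const_mul (a^2))
  refine h5.congr_deriv ?_
  have hA2 : a^2 = v^2 - u^2 := by rw [hu2, hv2]; ring
  rw [hA2]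
  have hx' : x = u^2 := hu2.symm
  rw [hx']
  field_simp
  ring

private lemma eds_ratio_lim (a C : ℝ) (ha : 0 < a) :
    Tendsto (fun x : ℝ => x / ((Real.sqrt (x*(x+a^2))
      - a^2 * Real.log (Real.sqrt x + Real.sqrt (x+a^2))) - C)) atTop (nhds 1) := by
  set F : ℝ → ℝ := fun x =>
    Real.sqrt (x*(x+a^2)) - a^2 * Real.log (Real.sqrt x + Real.sqrt (x+a^2)) with hF
  have h1 : Tendsto (fun x : ℝ => Real.sqrt (1 + a^2/x)) atTop (nhds 1) := by
    have h0 : Tendsto (fun x : ℝ => 1 + a^2/x) atTop (nhds 1) := by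
      have h' := Tendsto.add (tendsto_const_nhds (α := ℝ) (x := (1:ℝ)) (f := atTop))
        ((tendsto_const_nhds (x := a^2)).div_atTop (tendsto_id (α := ℝ)))
      simpa using h'
    have := (Real.continuous_sqrt.tendsto 1).comp h0
    simpa [Function.comp_def] using this
  have hup : Tendsto (fun x : ℝ => 2 * Real.sqrt (1/x + a^2/x^2)) atTop (nhds 0) := by
    have hx2 : Tendsto (fun x : ℝ => x^2) atTop atTop := tendsto_pow_atTop two_ne_zero
    have h0 : Tendsto (fun x : ℝ => 1/x + a^2/x^2) atTop (nhds 0) := by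
      have h' := Tendsto.add ((tendsto_const_nhds (x := (1:ℝ))).div_atTop (tendsto_id (α := ℝ)))
        ((tendsto_const_nhds (x := a^2)).div_atTop hx2)
      simpa using h'
    have := (Real.continuous_sqrt.tendsto 0).comp h0
    simpa using this.const_mul 2
  have h2 : Tendsto (fun x : ℝ => Real.log (Real.sqrt x + Real.sqrt (x+a^2)) / x) atTop (nhds 0) := by
    apply tendsto_of_tendsto_of_tendsto_of_le_of_le' tendsto_const_nhds hup
    · filter_upwards [eventually_ge_atTop (1:ℝ)] with x hx
      have hx0 : (0:ℝ) < x := lt_of_lt_of_le one_pos hx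
      have h1x : (1:ℝ) ≤ Real.sqrt x := by
        rw [show (1:ℝ) = Real.sqrt 1 by simp]; exact Real.sqrt_le_sqrt hx
      have hsq : (0:ℝ) ≤ Real.sqrt (x+a^2) := Real.sqrt_nonneg _
      have : (0:ℝ) ≤ Real.log (Real.sqrt x + Real.sqrt (x+a^2)) :=
        Real.log_nonneg (by linarith)
      positivity
    · filter_upwards [eventually_ge_atTop (1:ℝ)] with x hx
      have hx0 : (0:ℝ) < x := lt_of_lt_of_le one_pos hx
      have hxa : (0:ℝ) < x + a^2 := by positivity
      have hsx : Real.sqrt x ≤ Real.sqrt (x+a^2) := Real.sqrt_le_sqrt (by nlinarith)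
      have hsum : (0:ℝ) < Real.sqrt x + Real.sqrt (x+a^2) := by
        have := Real.sqrt_pos.mpr hx0; linarith [Real.sqrt_nonneg (x+a^2)]
      have hlog : Real.log (Real.sqrt x + Real.sqrt (x+a^2)) ≤ 2 * Real.sqrt (x+a^2) := by
        have := Real.log_le_sub_one_of_pos hsum
        linarith
      have hid : 2 * Real.sqrt (1/x + a^2/x^2) = 2 * Real.sqrt (x+a^2) / x := by
        rw [show 1/x + a^2/x^2 = (x+a^2)/x^2 by field_simp]
        rw [Real.sqrt_div hxa.le, Real.sqrt_sq hx0.le]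
        ring
      rw [hid]
      rw [div_le_div_iff₀ hx0 hx0] at *
      · nlinarith
  have h3 : Tendsto (fun x : ℝ => C / x) atTop (nhds 0) :=
    tendsto_const_nhds.div_atTop tendsto_id
  have hq : Tendsto (fun x : ℝ => (F x - C) / x) atTop (nhds 1) := by
    have hcomb := (h1.sub (h2.const_mul (a^2))).sub h3
    rw [show (1:ℝ) - a^2 * 0 - 0 = 1 by ring] at hcomb
    apply hcomb.congr'
    filter_upwards [eventually_gt_atTop (0:ℝ)] with x hx
    have hxa : (0:ℝ) < x + a^2 := by positivity
    have hA : Real.sqrt (x*(x+a^2)) / x = Real.sqrt (1 + a^2/x) := by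
      rw [show x*(x+a^2) = x^2 * (1 + a^2/x) by field_simp]
      rw [Real.sqrt_mul (sq_nonneg x), Real.sqrt_sq hx.le]
      rw [mul_div_assoc]
      field_simp
    simp only [hF]
    rw [sub_div, sub_div, hA, mul_div_assoc]
  have hinv := (hq.inv₀ one_ne_zero)
  rw [inv_one] at hinv
  apply hinv.congr'
  filter_upwards [eventually_gt_atTop (0:ℝ)] with x hx
  rw [inv_div]

/-- If `t' = √(1 + a²/t)` (the time coordinate of a timelike geodesic of the
Einstein–de Sitter-like metric with exponent `c = 1/2`), then
`√(t(t+a²)) − a² log(√t + √(t+a²)) − s` is constant, and `t(s)/s → 1` as `s → ∞`. -/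
theorem eds_half_time_geodesic (a s₀ : ℝ) (ha : 0 < a) (t : ℝ → ℝ)
    (hpos : ∀ s ∈ Set.Ici s₀, 0 < t s)
    (ht : ∀ s ∈ Set.Ici s₀, HasDerivAt t (Real.sqrt (1 + a ^ 2 / t s)) s) :
    (∀ s₁ ∈ Set.Ici s₀, ∀ s₂ ∈ Set.Ici s₀,
      Real.sqrt (t s₁ * (t s₁ + a ^ 2))
          - a ^ 2 * Real.log (Real.sqrt (t s₁) + Real.sqrt (t s₁ + a ^ 2)) - s₁
        = Real.sqrt (t s₂ * (t s₂ + a ^ 2))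
          - a ^ 2 * Real.log (Real.sqrt (t s₂) + Real.sqrt (t s₂ + a ^ 2)) - s₂) ∧
    Tendsto (fun s => t s / s) atTop (nhds 1) := by
  set F : ℝ → ℝ := fun x =>
    Real.sqrt (x*(x+a^2)) - a^2 * Real.log (Real.sqrt x + Real.sqrt (x+a^2)) with hF
  have hG : ∀ s ∈ Set.Ici s₀, HasDerivAt (fun s => F (t s) - s) 0 s := by
    intro s hs
    have hT : 0 < t s := hpos s hs
    have hTa : 0 < t s + a^2 := by positivity
    have hd := (hasDerivAt_FF a hT).comp s (ht s hs)
    have key : Real.sqrt (t s) / Real.sqrt (t s + a^2) * Real.sqrt (1 + a^2 / t s) = 1 := by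
      have h1 : (1 : ℝ) + a^2 / t s = (t s + a^2) / t s := by field_simp
      rw [h1, Real.sqrt_div hTa.le]
      have h2 : Real.sqrt (t s) ≠ 0 := (Real.sqrt_pos.mpr hT).ne'
      have h3 : Real.sqrt (t s + a^2) ≠ 0 := (Real.sqrt_pos.mpr hTa).ne'
      field_simp
    rw [key] at hd
    simpa using hd.fun_sub (hasDerivAt_id s)
  have hconst : ∀ s₁ ∈ Set.Ici s₀, ∀ s₂ ∈ Set.Ici s₀,
      F (t s₁) - s₁ = F (t s₂) - s₂ := by
    have key : ∀ p q : ℝ, p ∈ Set.Ici s₀ → q ∈ Set.Ici s₀ → p ≤ q →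
        F (t q) - q = F (t p) - p := by
      intro p q hp hq hpq
      have hsub : Set.Icc p q ⊆ Set.Ici s₀ := fun z hz => le_trans hp hz.1
      have := constant_of_has_deriv_right_zero
        (f := fun s => F (t s) - s) (a := p) (b := q)
        (fun z hz => (hG z (hsub hz)).continuousAt.continuousWithinAt)
        (fun z hz => ((hG z (hsub (Set.Ico_subset_Icc_self hz))).hasDerivWithinAt))
      exact this q (Set.right_mem_Icc.mpr hpq)
    intro s₁ hs₁ s₂ hs₂
    rcases le_total s₁ s₂ with h | h
    · exact (key s₁ s₂ hs₁ hs₂ h).symm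
    · exact key s₂ s₁ hs₂ hs₁ h
  refine ⟨fun s₁ hs₁ s₂ hs₂ => hconst s₁ hs₁ s₂ hs₂, ?_⟩
  -- t tends to infinity
  have htt : Tendsto t atTop atTop := by
    have hmono : MonotoneOn (fun s => t s - s) (Set.Ici s₀) := by
      apply monotoneOn_of_deriv_nonneg (convex_Ici s₀)
      · intro s hs
        exact ((ht s hs).sub (hasDerivAt_id s)).continuousAt.continuousWithinAt
      · intro s hs
        rw [interior_Ici] at hs
        exact ((ht s (Set.Ioi_subset_Ici_self hs)).sub (hasDerivAt_id s)).differentiableAt.differentiableWithinAt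
      · intro s hs
        rw [interior_Ici] at hs
        have hs' : s ∈ Set.Ici s₀ := Set.Ioi_subset_Ici_self hs
        have hd : HasDerivAt (fun s => t s - s) (Real.sqrt (1 + a^2 / t s) - 1) s := by
          simpa using (ht s hs').fun_sub (hasDerivAt_id s)
        rw [hd.deriv]
        have h1 : (1:ℝ) ≤ 1 + a^2 / t s := by
          have ht0 := hpos s hs'
          have : 0 ≤ a^2 / t s := by positivity
          linarith
        have h2 : (1:ℝ) ≤ Real.sqrt (1 + a^2 / t s) := by
          have := Real.sqrt_le_sqrt h1
          rwa [Real.sqrt_one] at this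
        linarith
    apply tendsto_atTop_mono' atTop (f₁ := fun s => s + (t s₀ - s₀))
    · filter_upwards [eventually_ge_atTop s₀] with s hs
      have := hmono (Set.self_mem_Ici) hs hs
      simp only at this
      linarith
    · exact tendsto_atTop_add_const_right _ _ tendsto_id
  -- the limit
  set C := F (t s₀) - s₀ with hC
  have hFt : ∀ s ∈ Set.Ici s₀, F (t s) - C = s := by
    intro s hs
    have := hconst s hs s₀ Set.self_mem_Ici
    rw [hC]
    linarith
  have hphi := eds_ratio_lim a C ha
  have hcomp := hphi.comp htt
  apply hcomp.congr'
  filter_upwards [eventually_ge_atTop s₀] with s hs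
  have := hFt s hs
  simp only [Function.comp]
  rw [show Real.sqrt (t s * (t s + a^2))
      - a^2 * Real.log (Real.sqrt (t s) + Real.sqrt (t s + a^2)) - C = F (t s) - C from rfl]
  rw [hFt s hs]

end
end
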